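/- Let u_n > 0 and define ε⁻(h) = (6(u_n + h u_n') + √(36(u_n + h u_n')² + 9h²u_n(12u_n'' + 4h u_n''' + h²u_n⁗)))/(9h²u_n). Then h²·ε⁻(h) → 4/3 as h → 0⁺; in particular ε⁻(h) → +∞ and the corresponding truncation error does not vanish. -/

import Mathlib

open Filter

/-- For the inconsistent root ε⁻, h²·ε⁻(h) → 4/3 as h → 0⁺; in particular ε⁻ → +∞. -/
theorem imq_fourth_order_minus_root_limit (un un' un'' un''' un'''' : ℝ)
    (hpos : 0 < un) :
    Tendsto (fun h : ℝ =>
        h^2 * ((6 * (un + h * un') +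
            Real.sqrt (36 * (un + h * un')^2 +
              9 * h^2 * un * (12 * un'' + 4 * h * un''' + h^2 * un''''))) /
          (9 * h^2 * un)))
      (nhdsWithin 0 (Set.Ioi 0)) (nhds (4 / 3)) ∧
    Tendsto (fun h : ℝ =>
        (6 * (un + h * un') +
            Real.sqrt (36 * (un + h * un')^2 +
              9 * h^2 * un * (12 * un'' + 4 * h * un''' + h^2 * un''''))) /
          (9 * h^2 * un))
      (nhdsWithin 0 (Set.Ioi 0)) atTop := by
  set N : ℝ → ℝ := fun h => 6 * (un + h * un') +
      Real.sqrt (36 * (un + h * un')^2 +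
        9 * h^2 * un * (12 * un'' + 4 * h * un''' + h^2 * un'''')) with hN
  have hNcont : Continuous N := by
    apply Continuous.add
    · fun_prop
    · exact Real.continuous_sqrt.comp (by fun_prop)
  have hN0 : N 0 = 12 * un := by
    have : Real.sqrt (36 * un ^ 2) = 6 * un := by
      rw [show (36 : ℝ) * un ^ 2 = (6 * un) ^ 2 by ring]
      exact Real.sqrt_sq (by positivity)
    simp [hN, this]
    ring
  have h1 : Tendsto (fun h : ℝ => h^2 * (N h / (9 * h^2 * un)))
      (nhdsWithin 0 (Set.Ioi 0)) (nhds (4 / 3)) := by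
    have heq : ∀ h ∈ Set.Ioi (0:ℝ), h^2 * (N h / (9 * h^2 * un)) = N h / (9 * un) := by
      intro h hh
      have : h ≠ 0 := ne_of_gt hh
      field_simp
    refine Tendsto.congr' (eventuallyEq_nhdsWithin_of_eqOn fun h hh => (heq h hh).symm) ?_
    have : Tendsto (fun h : ℝ => N h / (9 * un)) (nhdsWithin 0 (Set.Ioi 0))
        (nhds (N 0 / (9 * un))) :=
      ((hNcont.div_const _).tendsto 0).mono_left nhdsWithin_le_nhds
    convert this using 2
    rw [hN0]
    field_simp
    ring
  refine ⟨h1, ?_⟩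
  have hsq : Tendsto (fun h : ℝ => (h^2)⁻¹) (nhdsWithin 0 (Set.Ioi 0)) atTop := by
    apply tendsto_inv_nhdsGT_zero.comp
    rw [tendsto_nhdsWithin_iff]
    constructor
    · exact ((continuous_pow 2).tendsto 0).mono_left nhdsWithin_le_nhds |>.congr' (by
        filter_upwards with h; rfl) |>.congr (fun _ => rfl) |>.mono_right (by simp)
    · filter_upwards [self_mem_nhdsWithin] with h hh
      exact pow_pos (show (0:ℝ) < h from hh) 2
  have := Tendsto.pos_mul_atTop (by norm_num : (0:ℝ) < 4/3) h1 hsq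
  refine this.congr' ?_
  filter_upwards [self_mem_nhdsWithin] with h hh
  have : (h:ℝ) ≠ 0 := ne_of_gt hh
  simp only [hN]
  field_simp
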